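/- arXiv:1707.00047 — 3 statements merged into one kernel-verified Lean document; each statement's English description precedes it below -/
import Mathlib

section
/- Let n ≥ 1, let ψ be a positive semidefinite n×n complex matrix, let φ be a positive definite n×n complex matrix, and let α > 1. Then the supremum, over all n×n density matrices σ, of Tr[σ^{(α−1)/α} · ψ^{1/2} φ^{(1−α)/α} ψ^{1/2}] equals (Tr[(φ^{(1−α)/(2α)} ψ φ^{(1−α)/(2α)})^α])^{1/α}. (This identifies the Araki–Masuda variational expression for the sandwiched Rényi divergence of order α > 1 with the closed trace formula, as in Theorem 2.4(i) of the paper.) -/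
open Matrix
open scoped ComplexOrder

/-- Real power of a matrix, defined via the spectral decomposition when the matrix is
Hermitian (applying the real power function to the eigenvalues), and `0` otherwise. -/
noncomputable def mpow {n : ℕ} (A : Matrix (Fin n) (Fin n) ℂ) (r : ℝ) :
    Matrix (Fin n) (Fin n) ℂ :=
  if hA : A.IsHermitian then
    (hA.eigenvectorUnitary : Matrix (Fin n) (Fin n) ℂ) *
      Matrix.diagonal (fun i => ((hA.eigenvalues i ^ r : ℝ) : ℂ)) *
      (star hA.eigenvectorUnitary : Matrix (Fin n) (Fin n) ℂ)
  else 0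

section AMhelpers
open Polynomial

lemma continuousOn_finite {s : Set ℝ} (hs : s.Finite) (f : ℝ → ℝ) :
    ContinuousOn f s := by
  rw [continuousOn_iff_continuous_restrict]
  have : Finite s := hs
  exact continuous_of_discreteTopology

lemma continuousOn_spectrum {n : ℕ} (A : Matrix (Fin n) (Fin n) ℂ) (f : ℝ → ℝ) :
    ContinuousOn f (spectrum ℝ A) := continuousOn_finite (Matrix.finite_real_spectrum (A := A)) f

lemma continuousOn_image {n : ℕ} (A : Matrix (Fin n) (Fin n) ℂ) (g f : ℝ → ℝ) :
    ContinuousOn f (g '' spectrum ℝ A) :=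
  continuousOn_finite ((Matrix.finite_real_spectrum (A := A)).image g) f

lemma mpow_eq_cfc {n : ℕ} {A : Matrix (Fin n) (Fin n) ℂ} (hA : A.IsHermitian) (r : ℝ) :
    mpow A r = cfc (fun x : ℝ => x ^ r) A := by
  rw [hA.cfc_eq, mpow, dif_pos hA, Matrix.IsHermitian.cfc]
  rfl

lemma isSA {n : ℕ} {A : Matrix (Fin n) (Fin n) ℂ} (hA : A.IsHermitian) :
    IsSelfAdjoint A := hA

lemma IsHermitian_of_isSelfAdjoint {n : ℕ} {A : Matrix (Fin n) (Fin n) ℂ}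
    (h : IsSelfAdjoint A) : A.IsHermitian := h

lemma isHermitian_cfc {n : ℕ} {A : Matrix (Fin n) (Fin n) ℂ} (f : ℝ → ℝ) :
    (cfc f A).IsHermitian := cfc_predicate f A

lemma isHermitian_mpow {n : ℕ} {A : Matrix (Fin n) (Fin n) ℂ} (hA : A.IsHermitian) (r : ℝ) :
    (mpow A r).IsHermitian := by
  rw [mpow_eq_cfc hA]; exact isHermitian_cfc _

lemma trace_cfc' {n : ℕ} {A : Matrix (Fin n) (Fin n) ℂ} (hA : A.IsHermitian) (f : ℝ → ℝ) :
    (hA.cfc f).trace = ∑ i, ((f (hA.eigenvalues i) : ℝ) : ℂ) := by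
  rw [Matrix.IsHermitian.cfc, Unitary.conjStarAlgAut_apply, Matrix.trace_mul_cycle,
    Unitary.coe_star_mul_self, one_mul, Matrix.trace_diagonal]
  rfl

lemma posSemidef_cfc' {n : ℕ} {A : Matrix (Fin n) (Fin n) ℂ} (hA : A.IsHermitian) (f : ℝ → ℝ)
    (hf : ∀ i, 0 ≤ f (hA.eigenvalues i)) : (hA.cfc f).PosSemidef := by
  rw [Matrix.IsHermitian.cfc]
  have hd : (Matrix.diagonal (RCLike.ofReal ∘ f ∘ hA.eigenvalues) :
      Matrix (Fin n) (Fin n) ℂ).PosSemidef := by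
    refine Matrix.posSemidef_diagonal_iff.mpr fun i => ?_
    simpa using Complex.zero_le_real.mpr (hf i)
  simpa [Matrix.star_eq_conjTranspose] using
    hd.mul_mul_conjTranspose_same (hA.eigenvectorUnitary : Matrix (Fin n) (Fin n) ℂ)

lemma cfc_id_eq {n : ℕ} {A : Matrix (Fin n) (Fin n) ℂ} (hA : A.IsHermitian) :
    hA.cfc (fun x => x) = A := by
  rw [Matrix.IsHermitian.cfc]
  exact hA.spectral_theorem.symm

lemma trace_conj_unitary {n : ℕ} (V : Matrix.unitaryGroup (Fin n) ℂ)
    (M : Matrix (Fin n) (Fin n) ℂ) :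
    ((V : Matrix (Fin n) (Fin n) ℂ) * M * star (V : Matrix (Fin n) (Fin n) ℂ)).trace
      = M.trace := by
  rw [Matrix.trace_mul_cycle, Unitary.coe_star_mul_self, one_mul]

lemma unitary_row_sum {n : ℕ} {W : Matrix (Fin n) (Fin n) ℂ}
    (hW : W ∈ Matrix.unitaryGroup (Fin n) ℂ) (i : Fin n) :
    ∑ j, Complex.normSq (W i j) = 1 := by
  have h := Matrix.mem_unitaryGroup_iff.mp hW
  have h2 := congrFun (congrFun h i) i
  rw [Matrix.mul_apply] at h2
  simp only [Matrix.star_apply, RCLike.star_def, Matrix.one_apply_eq] at h2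
  have : ((∑ j, Complex.normSq (W i j) : ℝ) : ℂ) = ((1:ℝ) : ℂ) := by
    push_cast
    rw [← h2]
    congr 1; ext j
    rw [Complex.mul_conj]
  exact_mod_cast this

lemma unitary_col_sum {n : ℕ} {W : Matrix (Fin n) (Fin n) ℂ}
    (hW : W ∈ Matrix.unitaryGroup (Fin n) ℂ) (j : Fin n) :
    ∑ i, Complex.normSq (W i j) = 1 := by
  have h := Matrix.mem_unitaryGroup_iff'.mp hW
  have h2 := congrFun (congrFun h j) j
  rw [Matrix.mul_apply] at h2
  simp only [Matrix.star_apply, RCLike.star_def, Matrix.one_apply_eq] at h2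
  have : ((∑ i, Complex.normSq (W i j) : ℝ) : ℂ) = ((1:ℝ) : ℂ) := by
    push_cast
    rw [← h2]
    congr 1; ext i
    rw [mul_comm, Complex.mul_conj]
  exact_mod_cast this

lemma trace_unitary_conj_diag_mul {n : ℕ} (V U : Matrix.unitaryGroup (Fin n) ℂ)
    (d e : Fin n → ℂ) :
    (((V : Matrix (Fin n) (Fin n) ℂ) * Matrix.diagonal d * star (V : Matrix (Fin n) (Fin n) ℂ)) *
     ((U : Matrix (Fin n) (Fin n) ℂ) * Matrix.diagonal e * star (U : Matrix (Fin n) (Fin n) ℂ))).trace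
    = ∑ i, ∑ j, d i * e j *
        ((star (V : Matrix (Fin n) (Fin n) ℂ) * (U : Matrix (Fin n) (Fin n) ℂ)) i j *
          star ((star (V : Matrix (Fin n) (Fin n) ℂ) * (U : Matrix (Fin n) (Fin n) ℂ)) i j)) := by
  have h1 : ((V : Matrix (Fin n) (Fin n) ℂ) * Matrix.diagonal d * star (V : Matrix (Fin n) (Fin n) ℂ)) *
      ((U : Matrix (Fin n) (Fin n) ℂ) * Matrix.diagonal e * star (U : Matrix (Fin n) (Fin n) ℂ))
      = (V : Matrix (Fin n) (Fin n) ℂ) *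
        (Matrix.diagonal d * (star (V : Matrix (Fin n) (Fin n) ℂ) * (U : Matrix (Fin n) (Fin n) ℂ)) *
          Matrix.diagonal e * star (star (V : Matrix (Fin n) (Fin n) ℂ) * (U : Matrix (Fin n) (Fin n) ℂ))) *
        star (V : Matrix (Fin n) (Fin n) ℂ) := by
    have hV2 : (V : Matrix (Fin n) (Fin n) ℂ) * star (V : Matrix (Fin n) (Fin n) ℂ) = 1 := V.2.2
    simp only [StarMul.star_mul, star_star, mul_assoc, hV2, mul_one]
  rw [h1, trace_conj_unitary]
  have h2 : ∀ M : Matrix (Fin n) (Fin n) ℂ, M.trace = ∑ i, M i i := fun _ => rfl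
  rw [h2]
  refine Finset.sum_congr rfl fun i _ => ?_
  rw [Matrix.mul_apply]
  refine Finset.sum_congr rfl fun j _ => ?_
  simp only [Matrix.mul_diagonal, Matrix.diagonal_mul, Matrix.star_apply]
  ring

lemma semiconj_aeval {n : ℕ} (M N : Matrix (Fin n) (Fin n) ℂ) (q : ℝ[X]) :
    M * (Polynomial.aeval (N * M) q) = (Polynomial.aeval (M * N) q) * M := by
  have hsc : SemiconjBy M (N * M) (M * N) := (mul_assoc M N M).symm
  induction q using Polynomial.induction_on with
  | C r => simpa using (Algebra.commutes r M).symm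
  | add p q hp hq => simp [mul_add, add_mul, hp, hq]
  | monomial k a _ =>
    simp only [_root_.map_mul, _root_.map_pow, Polynomial.aeval_C, Polynomial.aeval_X]
    calc M * (algebraMap ℝ _ a * (N*M)^(k+1))
        = algebraMap ℝ _ a * (M * (N*M)^(k+1)) := by
          rw [← mul_assoc, ← Algebra.commutes, mul_assoc]
      _ = algebraMap ℝ _ a * ((M*N)^(k+1) * M) := by rw [(hsc.pow_right (k+1)).eq]
      _ = (algebraMap ℝ _ a * (M*N)^(k+1)) * M := by rw [mul_assoc]

lemma exists_interp (s : Finset ℝ) (f : ℝ → ℝ) : ∃ p : ℝ[X], ∀ x ∈ s, p.eval x = f x :=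
  ⟨Lagrange.interpolate s id f, fun x hx =>
    Lagrange.eval_interpolate_at_node f (Set.injOn_id _) hx⟩

lemma mpow_eq_cfc' {n : ℕ} {A : Matrix (Fin n) (Fin n) ℂ} (hA : A.IsHermitian) (r : ℝ) :
    mpow A r = hA.cfc (fun x => x ^ r) := by
  rw [mpow, dif_pos hA, Matrix.IsHermitian.cfc]; rfl

lemma trace_cfc_mul_cfc {n : ℕ} {A B : Matrix (Fin n) (Fin n) ℂ} (hA : A.IsHermitian)
    (hB : B.IsHermitian) (f g : ℝ → ℝ) :
    (hA.cfc f * hB.cfc g).trace =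
      ((∑ i, ∑ j, f (hA.eigenvalues i) * g (hB.eigenvalues j) *
        Complex.normSq ((star (hA.eigenvectorUnitary : Matrix (Fin n) (Fin n) ℂ) *
          (hB.eigenvectorUnitary : Matrix (Fin n) (Fin n) ℂ)) i j) : ℝ) : ℂ) := by
  rw [Matrix.IsHermitian.cfc, Matrix.IsHermitian.cfc, Unitary.conjStarAlgAut_apply,
    Unitary.conjStarAlgAut_apply, trace_unitary_conj_diag_mul]
  push_cast
  refine Finset.sum_congr rfl fun i _ => Finset.sum_congr rfl fun j _ => ?_
  rw [RCLike.star_def, Complex.mul_conj]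
  rfl

end AMhelpers

theorem araki_masuda_variational_sup {n : ℕ} (hn : 1 ≤ n)
    (ψ φ : Matrix (Fin n) (Fin n) ℂ) (hψ : ψ.PosSemidef) (hφ : φ.PosDef)
    (α : ℝ) (hα : 1 < α) :
    sSup {x : ℝ | ∃ σ : Matrix (Fin n) (Fin n) ℂ, σ.PosSemidef ∧ σ.trace = 1 ∧
        x = (Matrix.trace (mpow σ ((α - 1) / α) *
          (mpow ψ (1 / 2) * mpow φ ((1 - α) / α) * mpow ψ (1 / 2)))).re} =
      ((Matrix.trace (mpow (mpow φ ((1 - α) / (2 * α)) * ψ * mpow φ ((1 - α) / (2 * α))) α)).re)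
        ^ (1 / α) := by
  have hα0 : (0:ℝ) < α := by linarith
  have hαne : α ≠ 0 := hα0.ne'
  set p : ℝ := (α - 1) / α with hpdef
  have hp0 : 0 ≤ p := div_nonneg (by linarith) hα0.le
  have hpinv : p + 1/α = 1 := by rw [hpdef]; field_simp; ring
  have hψH : ψ.IsHermitian := hψ.1
  have hφH : φ.IsHermitian := hφ.1
  set B : Matrix (Fin n) (Fin n) ℂ := mpow ψ (1/2) with hBdef
  set C2 : Matrix (Fin n) (Fin n) ℂ := mpow φ ((1 - α) / (2 * α)) with hC2def
  set C : Matrix (Fin n) (Fin n) ℂ := mpow φ ((1 - α) / α) with hCdef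
  have hB : B.IsHermitian := isHermitian_mpow hψH _
  have hC2 : C2.IsHermitian := isHermitian_mpow hφH _
  set M : Matrix (Fin n) (Fin n) ℂ := C2 * B with hMdef
  set X : Matrix (Fin n) (Fin n) ℂ := B * C * B with hXdef
  set Y : Matrix (Fin n) (Fin n) ℂ := C2 * ψ * C2 with hYdef
  -- spectrum facts
  have hspecψ : ∀ t ∈ spectrum ℝ ψ, 0 ≤ t := by
    rw [hψH.spectrum_real_eq_range_eigenvalues]
    rintro t ⟨i, rfl⟩
    exact hψ.eigenvalues_nonneg i
  have hspecφ : ∀ t ∈ spectrum ℝ φ, 0 < t := by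
    rw [hφH.spectrum_real_eq_range_eigenvalues]
    rintro t ⟨i, rfl⟩
    exact hφ.eigenvalues_pos i
  -- products
  have hBB : B * B = ψ := by
    rw [hBdef, mpow_eq_cfc hψH, ← cfc_mul _ _ ψ (continuousOn_spectrum ψ _)
      (continuousOn_spectrum ψ _)]
    have heq : (spectrum ℝ ψ).EqOn (fun x : ℝ => x ^ ((1:ℝ)/2) * x ^ ((1:ℝ)/2))
        (fun x => x) := by
      intro t ht
      have h0 : 0 ≤ t := hspecψ t ht
      show t ^ ((1:ℝ)/2) * t ^ ((1:ℝ)/2) = t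
      rw [← Real.rpow_add' h0 (by norm_num)]
      norm_num
    rw [cfc_congr heq]
    exact cfc_id' ℝ ψ (isSA hψH)
  have hC22 : C2 * C2 = C := by
    rw [hC2def, hCdef, mpow_eq_cfc hφH, mpow_eq_cfc hφH, ← cfc_mul _ _ φ
      (continuousOn_spectrum φ _) (continuousOn_spectrum φ _)]
    refine cfc_congr fun t ht => ?_
    have h0 : 0 < t := hspecφ t ht
    show t ^ ((1 - α) / (2 * α)) * t ^ ((1 - α) / (2 * α)) = t ^ ((1 - α) / α)
    rw [← Real.rpow_add h0]
    congr 1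
    field_simp
    ring
  have hXMM : X = Mᴴ * M := by
    rw [hXdef, hMdef, conjTranspose_mul, hB.eq, hC2.eq, ← hC22]
    simp only [mul_assoc]
  have hYMM : Y = M * Mᴴ := by
    rw [hYdef, hMdef, conjTranspose_mul, hB.eq, hC2.eq, ← hBB]
    simp only [mul_assoc]
  have hXpsd : X.PosSemidef := hXMM ▸ Matrix.posSemidef_conjTranspose_mul_self M
  have hYpsd : Y.PosSemidef := hYMM ▸ Matrix.posSemidef_self_mul_conjTranspose M
  have hXH : X.IsHermitian := hXpsd.1
  have hYH : Y.IsHermitian := hYpsd.1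
  set x : Fin n → ℝ := hXH.eigenvalues with hxdef
  set y : Fin n → ℝ := hYH.eigenvalues with hydef
  have hx0 : ∀ j, 0 ≤ x j := fun j => hXpsd.eigenvalues_nonneg j
  set T : ℝ := ∑ j, (x j) ^ α with hTdef
  have hT0 : 0 ≤ T := Finset.sum_nonneg fun j _ => Real.rpow_nonneg (hx0 j) α
  have hspecX : ∀ t ∈ spectrum ℝ X, 0 ≤ t := by
    rw [hXH.spectrum_real_eq_range_eigenvalues]
    rintro t ⟨i, rfl⟩
    exact hx0 i
  -- t * t^(α-1) = t^α for t ≥ 0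
  have hpow : ∀ t : ℝ, 0 ≤ t → t * t ^ (α - 1) = t ^ α := by
    intro t ht
    rcases ht.eq_or_lt with h | h
    · rw [← h, Real.zero_rpow hαne, zero_mul]
    · calc t * t ^ (α - 1) = t ^ (1:ℝ) * t ^ (α - 1) := by rw [Real.rpow_one]
        _ = t ^ (1 + (α - 1)) := (Real.rpow_add' ht (by linarith)).symm
        _ = t ^ α := by norm_num
  -- Step C : traces of mpow X α and mpow Y α agree
  have htrXY : (mpow X α).trace = (mpow Y α).trace := by
    obtain ⟨q, hq⟩ := exists_interp
      ((Finset.univ.image x) ∪ (Finset.univ.image y)) (fun t => t ^ (α - 1))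
    have keyX : mpow X α = X * Polynomial.aeval X q := by
      rw [mpow_eq_cfc hXH]
      have h1 : (spectrum ℝ X).EqOn (fun t : ℝ => t ^ α) (fun t => t * q.eval t) := by
        intro t ht
        rw [hXH.spectrum_real_eq_range_eigenvalues] at ht
        obtain ⟨j, rfl⟩ := ht
        show (x j) ^ α = x j * q.eval (x j)
        rw [hq (x j) (Finset.mem_union_left _ (Finset.mem_image_of_mem x (Finset.mem_univ j)))]
        exact (hpow (x j) (hx0 j)).symm
      rw [cfc_congr h1,
        cfc_mul (fun t : ℝ => t) (fun t => q.eval t) X (continuousOn_spectrum X _)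
          (continuousOn_spectrum X _)]
      congr 1
      · exact cfc_id' ℝ X (isSA hXH)
      · exact cfc_polynomial q X (isSA hXH)
    have hy0 : ∀ j, 0 ≤ y j := fun j => hYpsd.eigenvalues_nonneg j
    have keyY : mpow Y α = Y * Polynomial.aeval Y q := by
      rw [mpow_eq_cfc hYH]
      have h1 : (spectrum ℝ Y).EqOn (fun t : ℝ => t ^ α) (fun t => t * q.eval t) := by
        intro t ht
        rw [hYH.spectrum_real_eq_range_eigenvalues] at ht
        obtain ⟨j, rfl⟩ := ht
        show (y j) ^ α = y j * q.eval (y j)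
        rw [hq (y j) (Finset.mem_union_right _ (Finset.mem_image_of_mem y (Finset.mem_univ j)))]
        exact (hpow (y j) (hy0 j)).symm
      rw [cfc_congr h1,
        cfc_mul (fun t : ℝ => t) (fun t => q.eval t) Y (continuousOn_spectrum Y _)
          (continuousOn_spectrum Y _)]
      congr 1
      · exact cfc_id' ℝ Y (isSA hYH)
      · exact cfc_polynomial q Y (isSA hYH)
    rw [keyX, keyY, hXMM, hYMM]
    calc (Mᴴ * M * Polynomial.aeval (Mᴴ * M) q).trace
        = (Mᴴ * (Polynomial.aeval (M * Mᴴ) q * M)).trace := by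
          rw [mul_assoc, semiconj_aeval]
      _ = (M * Mᴴ * Polynomial.aeval (M * Mᴴ) q).trace := by
          rw [← mul_assoc, Matrix.trace_mul_comm, ← mul_assoc]
  have htrX : (mpow X α).trace = ((T : ℝ) : ℂ) := by
    rw [mpow_eq_cfc hXH, hXH.cfc_eq, trace_cfc' hXH, hTdef]
    norm_cast
  have hRHSre : (Matrix.trace (mpow Y α)).re = T := by
    rw [← htrXY, htrX, Complex.ofReal_re]
  rw [hRHSre]
  -- upper bound
  have hUB : ∀ σ : Matrix (Fin n) (Fin n) ℂ, σ.PosSemidef → σ.trace = 1 →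
      (Matrix.trace (mpow σ p * X)).re ≤ T ^ (1/α) := by
    intro σ hσ hσtr
    have hσH : σ.IsHermitian := hσ.1
    set sf : Fin n → ℝ := hσH.eigenvalues with hsfdef
    have hs0 : ∀ i, 0 ≤ sf i := fun i => hσ.eigenvalues_nonneg i
    have hssum : ∑ i, sf i = 1 := by
      have h := trace_cfc' hσH (fun t => t)
      rw [cfc_id_eq hσH, hσtr] at h
      have : ((∑ i, sf i : ℝ) : ℂ) = ((1:ℝ) : ℂ) := by
        push_cast
        rw [← h]
      exact_mod_cast this
    set W : Matrix (Fin n) (Fin n) ℂ :=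
      star (hσH.eigenvectorUnitary : Matrix (Fin n) (Fin n) ℂ) *
        (hXH.eigenvectorUnitary : Matrix (Fin n) (Fin n) ℂ) with hWdef
    have hWmem : W ∈ Matrix.unitaryGroup (Fin n) ℂ :=
      mul_mem (Unitary.star_mem (SetLike.coe_mem hσH.eigenvectorUnitary))
        (SetLike.coe_mem hXH.eigenvectorUnitary)
    set c : Fin n → Fin n → ℝ := fun i j => Complex.normSq (W i j) with hcdef
    have hc0 : ∀ i j, 0 ≤ c i j := fun i j => Complex.normSq_nonneg _
    have hrow : ∀ i, ∑ j, c i j = 1 := fun i => unitary_row_sum hWmem i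
    have hcol : ∀ j, ∑ i, c i j = 1 := fun j => unitary_col_sum hWmem j
    have hval : (Matrix.trace (mpow σ p * X)).re =
        ∑ i, ∑ j, (sf i) ^ p * x j * c i j := by
      conv_lhs => rw [mpow_eq_cfc' hσH p, ← cfc_id_eq hXH]
      rw [trace_cfc_mul_cfc hσH hXH (fun t => t ^ p) (fun t => t), Complex.ofReal_re]
    rw [hval]
    rcases hT0.eq_or_lt with hT | hTpos
    · have hxall : ∀ j, x j = 0 := by
        intro j
        have hz : x j ^ α = 0 := by
          have := (Finset.sum_eq_zero_iff_of_nonneg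
            (fun j _ => Real.rpow_nonneg (hx0 j) α)).mp hT.symm
          exact this j (Finset.mem_univ j)
        exact ((Real.rpow_eq_zero_iff_of_nonneg (hx0 j)).mp hz).1
      have : ∀ i j, (sf i) ^ p * x j * c i j = 0 := by
        intro i j; rw [hxall j]; ring
      simp only [this, Finset.sum_const_zero]
      exact Real.rpow_nonneg hT0 _
    · have hTne : T ≠ 0 := hTpos.ne'
      have key : ∀ i j, (sf i) ^ p * x j * c i j ≤
          ((p * sf i + (1/α) * (x j ^ α / T)) * c i j) * T ^ (1/α) := by
        intro i j
        have hgeom := Real.geom_mean_le_arith_mean2_weighted hp0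
          (by positivity : (0:ℝ) ≤ 1/α) (hs0 i)
          (div_nonneg (Real.rpow_nonneg (hx0 j) α) hT0) hpinv
        have hxval : (x j ^ α / T) ^ (1/α) * T ^ (1/α) = x j := by
          rw [Real.div_rpow (Real.rpow_nonneg (hx0 j) α) hT0,
            div_mul_cancel₀ _ (Real.rpow_pos_of_pos hTpos _).ne',
            ← Real.rpow_mul (hx0 j), mul_one_div_cancel hαne, Real.rpow_one]
        have h2 : (sf i) ^ p * x j = ((sf i) ^ p * (x j ^ α / T) ^ (1/α)) * T ^ (1/α) := by
          rw [mul_assoc, hxval]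
        calc (sf i) ^ p * x j * c i j
            = ((sf i) ^ p * (x j ^ α / T) ^ (1/α)) * T ^ (1/α) * c i j := by rw [h2]
          _ ≤ (p * sf i + (1/α) * (x j ^ α / T)) * T ^ (1/α) * c i j := by
              have := mul_le_mul_of_nonneg_right
                (mul_le_mul_of_nonneg_right hgeom (Real.rpow_nonneg hT0 (1/α))) (hc0 i j)
              exact this
          _ = ((p * sf i + (1/α) * (x j ^ α / T)) * c i j) * T ^ (1/α) := by ring
      calc ∑ i, ∑ j, (sf i) ^ p * x j * c i j
          ≤ ∑ i, ∑ j, ((p * sf i + (1/α) * (x j ^ α / T)) * c i j) * T ^ (1/α) :=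
            Finset.sum_le_sum fun i _ => Finset.sum_le_sum fun j _ => key i j
        _ = (∑ i, ∑ j, (p * sf i + (1/α) * (x j ^ α / T)) * c i j) * T ^ (1/α) := by
            rw [Finset.sum_mul]
            exact Finset.sum_congr rfl fun i _ => by rw [Finset.sum_mul]
        _ = T ^ (1/α) := by
            have h1 : ∀ i, ∑ j, (p * sf i + (1/α) * (x j ^ α / T)) * c i j
                = p * sf i + ∑ j, ((1/α) * (x j ^ α / T)) * c i j := by
              intro i
              have he : ∀ j, (p * sf i + (1/α) * (x j ^ α / T)) * c i j
                  = p * sf i * c i j + ((1/α) * (x j ^ α / T)) * c i j := fun j => by ring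
              rw [Finset.sum_congr rfl fun j _ => he j, Finset.sum_add_distrib]
              congr 1
              rw [← Finset.mul_sum, hrow i, mul_one]
            have h2 : ∑ i, ∑ j, ((1/α) * (x j ^ α / T)) * c i j = 1/α := by
              rw [Finset.sum_comm]
              have he : ∀ j, ∑ i, ((1/α) * (x j ^ α / T)) * c i j
                  = (1/α) * (x j ^ α / T) := by
                intro j; rw [← Finset.mul_sum, hcol j, mul_one]
              rw [Finset.sum_congr rfl fun j _ => he j, ← Finset.mul_sum, ← Finset.sum_div,
                ← hTdef, div_self hTne, mul_one]
            have hsplit : ∑ i, ∑ j, (p * sf i + (1/α) * (x j ^ α / T)) * c i j = 1 := by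
              rw [Finset.sum_congr rfl fun i _ => h1 i, Finset.sum_add_distrib, h2,
                ← Finset.mul_sum, hssum, mul_one, hpinv]
            rw [hsplit, one_mul]
  -- membership : the supremum is attained
  have hmem : ∃ σ : Matrix (Fin n) (Fin n) ℂ, σ.PosSemidef ∧ σ.trace = 1 ∧
      T ^ (1/α) = (Matrix.trace (mpow σ p * X)).re := by
    rcases hT0.eq_or_lt with hT | hTpos
    · -- degenerate case : X = 0
      have hxall : ∀ j, x j = 0 := by
        intro j
        have hz : x j ^ α = 0 := by
          have := (Finset.sum_eq_zero_iff_of_nonneg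
            (fun j _ => Real.rpow_nonneg (hx0 j) α)).mp hT.symm
          exact this j (Finset.mem_univ j)
        exact ((Real.rpow_eq_zero_iff_of_nonneg (hx0 j)).mp hz).1
      have hX0 : X = 0 := by
        rw [← cfc_id_eq hXH, Matrix.IsHermitian.cfc]
        have hd : Matrix.diagonal (RCLike.ofReal ∘ (fun t : ℝ => t) ∘ hXH.eigenvalues)
            = (0 : Matrix (Fin n) (Fin n) ℂ) := by
          ext i j
          rcases eq_or_ne i j with rfl | hij
          · simp [Matrix.diagonal_apply_eq, hxall i, ← hxdef]
          · simp [Matrix.diagonal_apply_ne _ hij]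
        rw [hd, Unitary.conjStarAlgAut_apply, mul_zero, zero_mul]
      refine ⟨Matrix.diagonal (fun _ => (((n:ℝ)⁻¹ : ℝ) : ℂ)), ?_, ?_, ?_⟩
      · exact Matrix.posSemidef_diagonal_iff.mpr fun i =>
          Complex.zero_le_real.mpr (by positivity)
      · rw [Matrix.trace_diagonal]
        rw [Finset.sum_const, Finset.card_univ, Fintype.card_fin, nsmul_eq_mul]
        have hn0 : (n : ℂ) ≠ 0 := Nat.cast_ne_zero.mpr (by omega)
        push_cast
        exact mul_inv_cancel₀ hn0
      · rw [hX0, mul_zero, Matrix.trace_zero, Complex.zero_re, ← hT,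
          Real.zero_rpow (one_div_ne_zero hαne)]
    · -- T > 0 : explicit optimizer
      have hTne : T ≠ 0 := hTpos.ne'
      set g : ℝ → ℝ := fun t => t ^ α / T with hgdef
      set σ : Matrix (Fin n) (Fin n) ℂ := hXH.cfc g with hσdef
      have hσpsd : σ.PosSemidef := posSemidef_cfc' hXH g fun i =>
        div_nonneg (Real.rpow_nonneg (hx0 i) α) hT0
      have hσH : σ.IsHermitian := hσpsd.1
      refine ⟨σ, hσpsd, ?_, ?_⟩
      · rw [hσdef, trace_cfc' hXH]
        norm_cast
        simp only [hgdef]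
        rw [← Finset.sum_div, ← hTdef, div_self hTne]
      · have hcomp : mpow σ p = cfc (fun t => (g t) ^ p) X := by
          rw [mpow_eq_cfc hσH, hσdef, ← hXH.cfc_eq g]
          exact (cfc_comp (fun t : ℝ => t ^ p) g X (isSA hXH)
            (continuousOn_image X g _) (continuousOn_spectrum X g)).symm
        have hprod : mpow σ p * X = hXH.cfc (fun t => (g t) ^ p * t) := by
          conv_lhs => rw [hcomp]
          rw [show cfc (fun t => (g t) ^ p) X * X
              = cfc (fun t => (g t) ^ p) X * cfc (fun t : ℝ => t) X from by
            rw [cfc_id' ℝ X (isSA hXH)]]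
          rw [← cfc_mul (fun t : ℝ => (g t) ^ p) (fun t : ℝ => t) X
            (continuousOn_spectrum X _) (continuousOn_spectrum X _)]
          exact hXH.cfc_eq _
        have hterm : ∀ j, (g (x j)) ^ p * x j = x j ^ α / T ^ p := by
          intro j
          rw [hgdef]
          simp only
          rw [Real.div_rpow (Real.rpow_nonneg (hx0 j) α) hT0, ← Real.rpow_mul (hx0 j)]
          have hαp : α * p = α - 1 := by rw [hpdef]; field_simp
          rw [hαp, div_mul_eq_mul_div, mul_comm (x j ^ (α - 1)) (x j), hpow (x j) (hx0 j)]
        have hsum : ∑ j, (g (x j)) ^ p * x j = T ^ (1/α) := by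
          rw [Finset.sum_congr rfl fun j _ => hterm j, ← Finset.sum_div, ← hTdef]
          rw [show T / T ^ p = T ^ ((1:ℝ) - p) from by
            rw [Real.rpow_sub hTpos, Real.rpow_one]]
          congr 1
          linarith [hpinv]
        rw [hprod, trace_cfc' hXH]
        rw [show (∑ i, ((((g (hXH.eigenvalues i)) ^ p * hXH.eigenvalues i : ℝ)) : ℂ))
            = ((∑ j, (g (x j)) ^ p * x j : ℝ) : ℂ) from by norm_cast]
        rw [Complex.ofReal_re, hsum]
  -- conclusion
  refine IsGreatest.csSup_eq ⟨?_, ?_⟩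
  · obtain ⟨σ, h1, h2, h3⟩ := hmem
    exact ⟨σ, h1, h2, h3⟩
  · rintro r ⟨σ, h1, h2, rfl⟩
    exact hUB σ h1 h2
end

section
/- Let n ≥ 1, let φ be a positive definite n×n complex matrix, let k be an arbitrary n×n complex matrix, and let 1 < p < ∞. Then the supremum, over all n×n density matrices σ, of Tr[σ^{1−1/p} · k φ^{1/p−1} kᴴ] equals (Tr[(φ^{(1−p)/(2p)} kᴴ k φ^{(1−p)/(2p)})^p])^{1/p}. (This is the finite-dimensional content of Proposition 2.1 of the paper: the square of the Araki–Masuda L_{2p}-norm of k with weight φ equals the Kosaki L_p-norm of kᴴk with weight φ.) -/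
open Matrix
open scoped ComplexOrder

namespace AMK

open Polynomial

variable {n : ℕ}

local notation "Mat" => Matrix (Fin n) (Fin n) ℂ

lemma conj_pow (u A : Mat) (h1 : u * star u = 1) (h2 : star u * u = 1) (m : ℕ) :
    (u * A * star u) ^ m = u * A ^ m * star u := by
  have hcancel : ∀ X : Mat, star u * (u * X) = X := by
    intro X; rw [← mul_assoc, h2, one_mul]
  induction m with
  | zero => simpa [pow_zero] using h1.symm
  | succ m ih =>
      rw [pow_succ, ih, pow_succ]
      simp only [mul_assoc, hcancel]

lemma aeval_conj (u A : Mat) (h1 : u * star u = 1) (h2 : star u * u = 1) (Q : ℂ[X]) :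
    aeval (u * A * star u) Q = u * (aeval A Q : Mat) * star u := by
  induction Q using Polynomial.induction_on' with
  | add P1 P2 hP1 hP2 =>
      simp only [map_add, hP1, hP2, mul_add, add_mul]
  | monomial m a =>
      simp only [aeval_monomial, conj_pow u A h1 h2 m]
      rw [show u * (algebraMap ℂ Mat a * A ^ m) * star u
            = (u * algebraMap ℂ Mat a) * A ^ m * star u by
          simp only [mul_assoc],
        ← Algebra.commutes a u]
      simp only [mul_assoc]

lemma aeval_diagonal (d : Fin n → ℂ) (Q : ℂ[X]) :
    aeval (diagonal d) Q = diagonal (fun i => Q.eval (d i)) := by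
  have h1 : diagonal d =
      (Matrix.diagonalAlgHom ℂ : (Fin n → ℂ) →ₐ[ℂ] Matrix (Fin n) (Fin n) ℂ) d := rfl
  rw [h1, aeval_algHom_apply]
  have h2 : (fun i => Q.eval (d i)) = aeval d Q := by
    funext i
    have := aeval_algHom_apply (Pi.evalAlgHom ℂ (fun _ : Fin n => ℂ) i) d Q
    rw [show (Pi.evalAlgHom ℂ (fun _ : Fin n => ℂ) i) d = d i from rfl] at this
    rw [coe_aeval_eq_eval] at this
    exact this
  rw [h2]
  rfl

lemma eval_map_ofReal (P : ℝ[X]) (x : ℝ) :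
    (P.map (algebraMap ℝ ℂ)).eval (x : ℂ) = ((P.eval x : ℝ) : ℂ) := by
  rw [eval_map, show ((x : ℂ)) = algebraMap ℝ ℂ x from rfl, eval₂_at_apply]
  rfl

lemma aeval_conj_diag (u : Mat) (h1 : u * star u = 1) (h2 : star u * u = 1)
    (d : Fin n → ℝ) (P : ℝ[X]) :
    aeval (u * diagonal (fun i => (d i : ℂ)) * star u) (P.map (algebraMap ℝ ℂ))
      = u * diagonal (fun i => ((P.eval (d i) : ℝ) : ℂ)) * star u := by
  rw [aeval_conj _ _ h1 h2, aeval_diagonal]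
  have h3 : (fun i => (P.map (algebraMap ℝ ℂ)).eval ((d i : ℂ)))
      = fun i => ((P.eval (d i) : ℝ) : ℂ) := by
    funext i; exact eval_map_ofReal P (d i)
  rw [h3]

lemma mpow_eq {A : Mat} (hA : A.IsHermitian) (r : ℝ) :
    mpow A r = (hA.eigenvectorUnitary : Mat) *
      Matrix.diagonal (fun i => ((hA.eigenvalues i ^ r : ℝ) : ℂ)) *
      (star hA.eigenvectorUnitary : Mat) := by
  rw [mpow, dif_pos hA]

lemma unit1 {A : Mat} (hA : A.IsHermitian) :
    (hA.eigenvectorUnitary : Mat) * star (hA.eigenvectorUnitary : Mat) = 1 :=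
  Matrix.mem_unitaryGroup_iff.mp hA.eigenvectorUnitary.2

lemma unit2 {A : Mat} (hA : A.IsHermitian) :
    star (hA.eigenvectorUnitary : Mat) * (hA.eigenvectorUnitary : Mat) = 1 :=
  Matrix.mem_unitaryGroup_iff'.mp hA.eigenvectorUnitary.2

lemma spectral {A : Mat} (hA : A.IsHermitian) :
    A = (hA.eigenvectorUnitary : Mat) *
      Matrix.diagonal (fun i => ((hA.eigenvalues i : ℝ) : ℂ)) *
      (star hA.eigenvectorUnitary : Mat) := by
  convert hA.spectral_theorem using 3
  rw [Unitary.conjStarAlgAut_apply]; rfl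

lemma mpow_eq_aeval {A : Mat} (hA : A.IsHermitian) (r : ℝ) (P : ℝ[X])
    (h : ∀ i, P.eval (hA.eigenvalues i) = hA.eigenvalues i ^ r) :
    mpow A r = aeval A (P.map (algebraMap ℝ ℂ)) := by
  conv_rhs => rw [spectral hA]
  rw [aeval_conj_diag _ (unit1 hA) (unit2 hA), mpow_eq hA]
  have h3 : (fun i => ((P.eval (hA.eigenvalues i) : ℝ) : ℂ))
      = fun i => ((hA.eigenvalues i ^ r : ℝ) : ℂ) := by
    funext i; rw [h i]
  rw [h3]

lemma diag_real_herm (d : Fin n → ℝ) :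
    (diagonal (fun i => (d i : ℂ)) : Mat).IsHermitian := by
  rw [Matrix.IsHermitian, diagonal_conjTranspose]
  have : (star fun i => ((d i : ℝ) : ℂ)) = fun i => ((d i : ℝ) : ℂ) := by
    funext i
    simp [Pi.star_apply, Complex.star_def, Complex.conj_ofReal]
  rw [this]

lemma conj_diag_herm (u : Mat) (d : Fin n → ℝ) :
    (u * diagonal (fun i => (d i : ℂ)) * star u).IsHermitian := by
  rw [Matrix.star_eq_conjTranspose]
  exact isHermitian_mul_mul_conjTranspose u (diag_real_herm d)

lemma mpow_isHermitian {A : Mat} (hA : A.IsHermitian) (r : ℝ) :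
    (mpow A r).IsHermitian := by
  rw [mpow_eq hA]
  exact conj_diag_herm _ _

lemma mpow_mul_mpow {A : Mat} (hA : A.IsHermitian) (a b : ℝ)
    (h : ∀ i, hA.eigenvalues i ^ a * hA.eigenvalues i ^ b = hA.eigenvalues i ^ (a + b)) :
    mpow A a * mpow A b = mpow A (a + b) := by
  rw [mpow_eq hA, mpow_eq hA, mpow_eq hA]
  set u := (hA.eigenvectorUnitary : Mat)
  have h2 : star u * u = 1 := unit2 hA
  have hcancel : ∀ X : Mat, star u * (u * X) = X := by
    intro X; rw [← mul_assoc, h2, one_mul]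
  calc u * diagonal (fun i => ((hA.eigenvalues i ^ a : ℝ) : ℂ)) * star u *
        (u * diagonal (fun i => ((hA.eigenvalues i ^ b : ℝ) : ℂ)) * star u)
      = u * (diagonal (fun i => ((hA.eigenvalues i ^ a : ℝ) : ℂ)) *
          diagonal (fun i => ((hA.eigenvalues i ^ b : ℝ) : ℂ))) * star u := by
        simp only [mul_assoc, hcancel]
    _ = u * diagonal (fun i => ((hA.eigenvalues i ^ (a + b) : ℝ) : ℂ)) * star u := by
        rw [diagonal_mul_diagonal]
        have h3 : (fun i => ((hA.eigenvalues i ^ a : ℝ) : ℂ) * ((hA.eigenvalues i ^ b : ℝ) : ℂ))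
            = fun i => ((hA.eigenvalues i ^ (a + b) : ℝ) : ℂ) := by
          funext i
          rw [← Complex.ofReal_mul, h i]
        rw [h3]

lemma mpow_one {A : Mat} (hA : A.IsHermitian) : mpow A 1 = A := by
  rw [mpow_eq hA]
  simp only [Real.rpow_one]
  exact (spectral hA).symm

lemma trace_conj_diag (u : Mat) (h2 : star u * u = 1) (d : Fin n → ℂ) :
    Matrix.trace (u * diagonal d * star u) = ∑ i, d i := by
  rw [Matrix.trace_mul_cycle, h2, one_mul, trace_diagonal]

lemma trace_conj_conj (u v : Mat) (hu1 : u * star u = 1) (hu2 : star u * u = 1)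
    (a b : Fin n → ℝ) :
    Matrix.trace ((u * diagonal (fun i => (a i : ℂ)) * star u) *
        (v * diagonal (fun j => (b j : ℂ)) * star v))
      = ((∑ i, ∑ j, a i * b j * Complex.normSq ((star u * v) i j) : ℝ) : ℂ) := by
  set C : Mat := star u * v with hC
  have hsC : star C = star v * u := by
    rw [hC, StarMul.star_mul, star_star]
  have htail : star v * (u * star u) = star v := by rw [hu1, mul_one]
  have key : (u * diagonal (fun i => (a i : ℂ)) * star u) *
        (v * diagonal (fun j => (b j : ℂ)) * star v)
      = u * (diagonal (fun i => (a i : ℂ)) * (C * (diagonal (fun j => (b j : ℂ)) *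
          (star C * star u)))) := by
    rw [hsC, hC]
    simp only [mul_assoc, htail]
  rw [key, Matrix.trace_mul_comm]
  have key2 : diagonal (fun i => (a i : ℂ)) * (C * (diagonal (fun j => (b j : ℂ)) *
          (star C * star u))) * u
      = diagonal (fun i => (a i : ℂ)) * (C * (diagonal (fun j => (b j : ℂ)) * star C)) := by
    have : ∀ X : Mat, X * star u * u = X := by
      intro X; rw [mul_assoc, hu2, mul_one]
    simp only [mul_assoc, hu2, mul_one]
  rw [key2]
  have expand : Matrix.trace (diagonal (fun i => (a i : ℂ)) *
        (C * (diagonal (fun j => (b j : ℂ)) * star C)))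
      = ∑ i, (a i : ℂ) * ∑ j, C i j * ((b j : ℂ) * star (C i j)) := by
    rw [Matrix.trace]
    apply Finset.sum_congr rfl
    intro i _
    rw [Matrix.diag_apply, Matrix.diagonal_mul, Matrix.mul_apply]
    congr 1
    apply Finset.sum_congr rfl
    intro j _
    rw [Matrix.diagonal_mul, Matrix.star_apply]
  rw [expand]
  push_cast
  apply Finset.sum_congr rfl
  intro i _
  rw [Finset.mul_sum]
  apply Finset.sum_congr rfl
  intro j _
  rw [← Complex.mul_conj, Complex.star_def]
  ring

lemma conj_mul_conj (u : Mat) (h2 : star u * u = 1) (X Y : Mat) :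
    (u * X * star u) * (u * Y * star u) = u * (X * Y) * star u := by
  have hcancel : ∀ Z : Mat, star u * (u * Z) = Z := by
    intro Z; rw [← mul_assoc, h2, one_mul]
  simp only [mul_assoc, hcancel]

lemma mul_aeval_ct (B : Mat) (Q : ℂ[X]) :
    B * aeval (Bᴴ * B) Q = aeval (B * Bᴴ) Q * B := by
  have hpow : ∀ m : ℕ, B * (Bᴴ * B) ^ m = (B * Bᴴ) ^ m * B := by
    intro m
    induction m with
    | zero => simp
    | succ m ih =>
        rw [pow_succ, pow_succ, ← mul_assoc, ← mul_assoc, ih]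
        simp only [mul_assoc]
  induction Q using Polynomial.induction_on' with
  | add P1 P2 h1 h2 => simp only [map_add, mul_add, add_mul, h1, h2]
  | monomial m a =>
      simp only [aeval_monomial]
      rw [← mul_assoc, ← Algebra.commutes a B, mul_assoc, hpow m, ← mul_assoc]

/-- Polynomial interpolating `x ^ r` on a finite set of reals. -/
noncomputable def interp (s : Finset ℝ) (r : ℝ) : ℝ[X] :=
  Lagrange.interpolate s id (fun x => x ^ r)

lemma interp_eval {s : Finset ℝ} {x : ℝ} (hx : x ∈ s) (r : ℝ) :
    (interp s r).eval x = x ^ r :=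
  Lagrange.eval_interpolate_at_node _ (Set.injOn_id _) hx

lemma mpow_flip (B : Mat) (r : ℝ) :
    B * mpow (Bᴴ * B) r = mpow (B * Bᴴ) r * B := by
  have h1 : (Bᴴ * B).IsHermitian := (Matrix.posSemidef_conjTranspose_mul_self B).1
  have h2 : (B * Bᴴ).IsHermitian := (Matrix.posSemidef_self_mul_conjTranspose B).1
  set s : Finset ℝ := (Finset.image h1.eigenvalues Finset.univ) ∪
      (Finset.image h2.eigenvalues Finset.univ) with hs
  have e1 : mpow (Bᴴ * B) r = aeval (Bᴴ * B) ((interp s r).map (algebraMap ℝ ℂ)) :=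
    mpow_eq_aeval h1 r _ (fun i => interp_eval
      (Finset.mem_union_left _ (Finset.mem_image_of_mem _ (Finset.mem_univ i))) r)
  have e2 : mpow (B * Bᴴ) r = aeval (B * Bᴴ) ((interp s r).map (algebraMap ℝ ℂ)) :=
    mpow_eq_aeval h2 r _ (fun i => interp_eval
      (Finset.mem_union_right _ (Finset.mem_image_of_mem _ (Finset.mem_univ i))) r)
  rw [e1, e2, mul_aeval_ct]

lemma mpow_unitary_conj (u : Mat) (h1 : u * star u = 1) (h2 : star u * u = 1)
    (d : Fin n → ℝ) (r : ℝ) :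
    mpow (u * diagonal (fun i => (d i : ℂ)) * star u) r
      = u * diagonal (fun i => ((d i ^ r : ℝ) : ℂ)) * star u := by
  have hX : (u * diagonal (fun i => (d i : ℂ)) * star u).IsHermitian := conj_diag_herm u d
  set s : Finset ℝ := (Finset.image hX.eigenvalues Finset.univ) ∪
      (Finset.image d Finset.univ) with hs
  have e1 : mpow (u * diagonal (fun i => (d i : ℂ)) * star u) r
      = aeval (u * diagonal (fun i => (d i : ℂ)) * star u)
          ((interp s r).map (algebraMap ℝ ℂ)) :=
    mpow_eq_aeval hX r _ (fun i => interp_eval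
      (Finset.mem_union_left _ (Finset.mem_image_of_mem _ (Finset.mem_univ i))) r)
  rw [e1, aeval_conj_diag u h1 h2]
  have h3 : (fun i => (((interp s r).eval (d i) : ℝ) : ℂ))
      = fun i => ((d i ^ r : ℝ) : ℂ) := by
    funext i
    rw [interp_eval (Finset.mem_union_right _
      (Finset.mem_image_of_mem _ (Finset.mem_univ i))) r]
  rw [h3]

lemma trace_spectral {A : Mat} (hA : A.IsHermitian) :
    Matrix.trace A = ((∑ i, hA.eigenvalues i : ℝ) : ℂ) := by
  conv_lhs => rw [spectral hA]
  rw [trace_conj_diag _ (unit2 hA)]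
  push_cast
  rfl

lemma trace_mpow {A : Mat} (hA : A.IsHermitian) (r : ℝ) :
    Matrix.trace (mpow A r) = ((∑ i, hA.eigenvalues i ^ r : ℝ) : ℂ) := by
  rw [mpow_eq hA, trace_conj_diag _ (unit2 hA)]
  push_cast
  rfl

end AMK

theorem araki_masuda_sq_eq_kosaki {n : ℕ} (hn : 1 ≤ n)
    (φ k : Matrix (Fin n) (Fin n) ℂ) (hφ : φ.PosDef)
    (p : ℝ) (hp : 1 < p) :
    sSup {x : ℝ | ∃ σ : Matrix (Fin n) (Fin n) ℂ, σ.PosSemidef ∧ σ.trace = 1 ∧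
        x = (Matrix.trace (mpow σ (1 - 1 / p) * (k * mpow φ (1 / p - 1) * kᴴ))).re} =
      ((Matrix.trace (mpow (mpow φ ((1 - p) / (2 * p)) * (kᴴ * k) *
          mpow φ ((1 - p) / (2 * p))) p)).re) ^ (1 / p) := by
  classical
  have hp0 : (0:ℝ) < p := lt_trans one_pos hp
  have hpne : p ≠ 0 := ne_of_gt hp0
  set c : ℝ := (1 - p) / (2 * p) with hcdef
  have hmpowφH : (mpow φ c).IsHermitian := AMK.mpow_isHermitian hφ.1 c
  obtain ⟨B, hBdef⟩ : ∃ B : Matrix (Fin n) (Fin n) ℂ, B = k * mpow φ c := ⟨_, rfl⟩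
  have hBH : Bᴴ = mpow φ c * kᴴ := by
    rw [hBdef, conjTranspose_mul, hmpowφH.eq]
  have hAeq : mpow φ c * (kᴴ * k) * mpow φ c = Bᴴ * B := by
    rw [hBH, hBdef]; simp only [mul_assoc]
  have hMeq : k * mpow φ (1 / p - 1) * kᴴ = B * Bᴴ := by
    have hcc : mpow φ c * mpow φ c = mpow φ (1 / p - 1) := by
      have h := AMK.mpow_mul_mpow hφ.1 c c
        (fun i => (Real.rpow_add (hφ.eigenvalues_pos i) c c).symm)
      rw [show c + c = 1 / p - 1 by rw [hcdef]; field_simp; ring] at h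
      exact h
    rw [← hcc, hBH, hBdef]; simp only [mul_assoc]
  rw [hAeq, hMeq]
  -- flip the trace
  have hABps : (Bᴴ * B).PosSemidef := Matrix.posSemidef_conjTranspose_mul_self B
  have hMps : (B * Bᴴ).PosSemidef := Matrix.posSemidef_self_mul_conjTranspose B
  have hMH : (B * Bᴴ).IsHermitian := hMps.1
  have hppos_ne : (1:ℝ) + (p - 1) ≠ 0 := by
    rw [show (1:ℝ) + (p-1) = p by ring]; exact hpne
  have hsplit : ∀ (X : Matrix (Fin n) (Fin n) ℂ), X.PosSemidef →
      mpow X p = X * mpow X (p - 1) := by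
    intro X hX
    have h := AMK.mpow_mul_mpow hX.1 1 (p - 1)
      (fun i => by rw [← Real.rpow_add' (hX.eigenvalues_nonneg i) hppos_ne])
    rw [AMK.mpow_one hX.1] at h
    conv_lhs => rw [show p = 1 + (p-1) by ring]
    rw [h]
  have hflip : Matrix.trace (mpow (Bᴴ * B) p) = Matrix.trace (mpow (B * Bᴴ) p) := by
    rw [hsplit _ hABps, hsplit _ hMps]
    calc Matrix.trace (Bᴴ * B * mpow (Bᴴ * B) (p - 1))
        = Matrix.trace (Bᴴ * (B * mpow (Bᴴ * B) (p - 1))) := by rw [mul_assoc]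
      _ = Matrix.trace (Bᴴ * (mpow (B * Bᴴ) (p - 1) * B)) := by rw [AMK.mpow_flip B (p-1)]
      _ = Matrix.trace (Bᴴ * mpow (B * Bᴴ) (p - 1) * B) := by rw [← mul_assoc]
      _ = Matrix.trace (B * Bᴴ * mpow (B * Bᴴ) (p - 1)) := by
            rw [Matrix.trace_mul_cycle]
  rw [hflip]
  set μ : Fin n → ℝ := hMH.eigenvalues with hμdef
  have hμ0 : ∀ j, 0 ≤ μ j := fun j => hMps.eigenvalues_nonneg j
  set T : ℝ := ∑ j, μ j ^ p with hTdef
  have hT0 : 0 ≤ T := Finset.sum_nonneg fun j _ => Real.rpow_nonneg (hμ0 j) p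
  have htr : (Matrix.trace (mpow (B * Bᴴ) p)).re = T := by
    rw [AMK.trace_mpow hMH p, Complex.ofReal_re]
  rw [htr]
  set v : Matrix (Fin n) (Fin n) ℂ := (hMH.eigenvectorUnitary : Matrix (Fin n) (Fin n) ℂ)
    with hvdef
  have hv1 := AMK.unit1 hMH
  have hv2 := AMK.unit2 hMH
  -- conjugate exponent facts
  have hpsub : (0:ℝ) < p - 1 := by linarith
  have hpq : Real.HolderConjugate (p / (p - 1)) p := by
    rw [Real.holderConjugate_iff]
    constructor
    · rw [lt_div_iff₀ hpsub]; linarith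
    · have hp1 : p - 1 ≠ 0 := ne_of_gt hpsub
      field_simp
      ring
  -- upper bound
  have hub : ∀ x ∈ {x : ℝ | ∃ σ : Matrix (Fin n) (Fin n) ℂ, σ.PosSemidef ∧ σ.trace = 1 ∧
      x = (Matrix.trace (mpow σ (1 - 1 / p) * (B * Bᴴ))).re}, x ≤ T ^ (1/p) := by
    rintro x ⟨σ, hσps, hσtr, rfl⟩
    have hσH : σ.IsHermitian := hσps.1
    have hs0 : ∀ i, 0 ≤ hσH.eigenvalues i := fun i => hσps.eigenvalues_nonneg i
    have hsum1 : ∑ i, hσH.eigenvalues i = 1 := by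
      have h := AMK.trace_spectral hσH
      rw [hσtr] at h
      exact_mod_cast h.symm
    set u : Matrix (Fin n) (Fin n) ℂ := (hσH.eigenvectorUnitary : Matrix (Fin n) (Fin n) ℂ)
      with hudef
    have hu1 := AMK.unit1 hσH
    have hu2 := AMK.unit2 hσH
    set w : Fin n → Fin n → ℝ := fun i j => Complex.normSq ((star u * v) i j) with hwdef
    have hw0 : ∀ i j, 0 ≤ w i j := fun i j => Complex.normSq_nonneg _
    have hCmem : (star u * v) ∈ Matrix.unitaryGroup (Fin n) ℂ :=
      mul_mem (Unitary.star_mem hσH.eigenvectorUnitary.2) hMH.eigenvectorUnitary.2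
    have hCu : (star u * v) * star (star u * v) = 1 := Matrix.mem_unitaryGroup_iff.mp hCmem
    have hCu2 : star (star u * v) * (star u * v) = 1 := Matrix.mem_unitaryGroup_iff'.mp hCmem
    have hrow : ∀ i, ∑ j, w i j = 1 := by
      intro i
      have h := congrFun (congrFun hCu i) i
      rw [Matrix.mul_apply] at h
      have h1 : ∀ j, (star u * v) i j * (star (star u * v)) j i = ((w i j : ℝ) : ℂ) := by
        intro j
        rw [Matrix.star_apply,
          show star ((star u * v) i j) = (starRingEnd ℂ) ((star u * v) i j) from rfl,
          Complex.mul_conj]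
      rw [Finset.sum_congr rfl (fun j _ => h1 j), Matrix.one_apply_eq] at h
      exact_mod_cast h
    have hcol : ∀ j, ∑ i, w i j = 1 := by
      intro j
      have h := congrFun (congrFun hCu2 j) j
      rw [Matrix.mul_apply] at h
      have h1 : ∀ i, (star (star u * v)) j i * (star u * v) i j = ((w i j : ℝ) : ℂ) := by
        intro i
        rw [Matrix.star_apply,
          show star ((star u * v) i j) = (starRingEnd ℂ) ((star u * v) i j) from rfl,
          mul_comm, Complex.mul_conj]
      rw [Finset.sum_congr rfl (fun i _ => h1 i), Matrix.one_apply_eq] at h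
      exact_mod_cast h
    have e : Matrix.trace (mpow σ (1 - 1 / p) * (B * Bᴴ))
        = ((∑ i, ∑ j, hσH.eigenvalues i ^ (1 - 1/p) * μ j * w i j : ℝ) : ℂ) := by
      conv_lhs => rw [AMK.mpow_eq hσH (1 - 1/p)]
      conv_lhs => rw [AMK.spectral hMH]
      exact AMK.trace_conj_conj u v hu1 hu2 _ _
    rw [e, Complex.ofReal_re]
    -- Hölder
    have main := Real.inner_le_Lp_mul_Lq_of_nonneg (s := (Finset.univ : Finset (Fin n × Fin n)))
      hpq
      (f := fun ij => (hσH.eigenvalues ij.1 * w ij.1 ij.2) ^ (1 - 1/p))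
      (g := fun ij => (μ ij.2 ^ p * w ij.1 ij.2) ^ (1/p))
      (fun ij _ => Real.rpow_nonneg (mul_nonneg (hs0 _) (hw0 _ _)) _)
      (fun ij _ => Real.rpow_nonneg (mul_nonneg (Real.rpow_nonneg (hμ0 _) _) (hw0 _ _)) _)
    have hfg : ∀ ij : Fin n × Fin n,
        (hσH.eigenvalues ij.1 * w ij.1 ij.2) ^ (1 - 1/p) * (μ ij.2 ^ p * w ij.1 ij.2) ^ (1/p)
        = hσH.eigenvalues ij.1 ^ (1 - 1/p) * μ ij.2 * w ij.1 ij.2 := by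
      intro ij
      have hww : w ij.1 ij.2 ^ ((1:ℝ) - 1/p) * w ij.1 ij.2 ^ ((1:ℝ)/p) = w ij.1 ij.2 := by
        rw [← Real.rpow_add' (hw0 _ _) (by rw [sub_add_cancel]; exact one_ne_zero),
          sub_add_cancel, Real.rpow_one]
      rw [Real.mul_rpow (hs0 _) (hw0 _ _),
        Real.mul_rpow (Real.rpow_nonneg (hμ0 _) _) (hw0 _ _),
        ← Real.rpow_mul (hμ0 _), mul_one_div, div_self hpne, Real.rpow_one]
      calc hσH.eigenvalues ij.1 ^ (1 - 1/p) * w ij.1 ij.2 ^ (1 - 1/p) *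
            (μ ij.2 * w ij.1 ij.2 ^ (1/p))
          = hσH.eigenvalues ij.1 ^ (1 - 1/p) * μ ij.2 *
              (w ij.1 ij.2 ^ ((1:ℝ) - 1/p) * w ij.1 ij.2 ^ ((1:ℝ)/p)) := by ring
        _ = hσH.eigenvalues ij.1 ^ (1 - 1/p) * μ ij.2 * w ij.1 ij.2 := by rw [hww]
    have hsumf : ∑ ij : Fin n × Fin n,
        ((hσH.eigenvalues ij.1 * w ij.1 ij.2) ^ ((1:ℝ) - 1/p)) ^ (p/(p-1)) = 1 := by
      have he : ∀ ij : Fin n × Fin n,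
          ((hσH.eigenvalues ij.1 * w ij.1 ij.2) ^ ((1:ℝ) - 1/p)) ^ (p/(p-1))
          = hσH.eigenvalues ij.1 * w ij.1 ij.2 := by
        intro ij
        rw [← Real.rpow_mul (mul_nonneg (hs0 _) (hw0 _ _)),
          show ((1:ℝ) - 1/p) * (p/(p-1)) = 1 by field_simp, Real.rpow_one]
      rw [Finset.sum_congr rfl (fun ij _ => he ij), Fintype.sum_prod_type]
      calc ∑ i, ∑ j, hσH.eigenvalues i * w i j
          = ∑ i, hσH.eigenvalues i * ∑ j, w i j := by
            exact Finset.sum_congr rfl (fun i _ => (Finset.mul_sum _ _ _).symm)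
        _ = ∑ i, hσH.eigenvalues i := by
            exact Finset.sum_congr rfl (fun i _ => by rw [hrow i, mul_one])
        _ = 1 := hsum1
    have hsumg : ∑ ij : Fin n × Fin n,
        ((μ ij.2 ^ p * w ij.1 ij.2) ^ ((1:ℝ)/p)) ^ p = T := by
      have he : ∀ ij : Fin n × Fin n,
          ((μ ij.2 ^ p * w ij.1 ij.2) ^ ((1:ℝ)/p)) ^ p = μ ij.2 ^ p * w ij.1 ij.2 := by
        intro ij
        rw [← Real.rpow_mul (mul_nonneg (Real.rpow_nonneg (hμ0 _) _) (hw0 _ _)),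
          one_div, inv_mul_cancel₀ hpne, Real.rpow_one]
      rw [Finset.sum_congr rfl (fun ij _ => he ij), Fintype.sum_prod_type, Finset.sum_comm]
      calc ∑ j, ∑ i, μ j ^ p * w i j
          = ∑ j, μ j ^ p * ∑ i, w i j := by
            exact Finset.sum_congr rfl (fun j _ => (Finset.mul_sum _ _ _).symm)
        _ = ∑ j, μ j ^ p := by
            exact Finset.sum_congr rfl (fun j _ => by rw [hcol j, mul_one])
        _ = T := by rw [hTdef]
    rw [hsumf, hsumg, Real.one_rpow, one_mul] at main
    rw [Finset.sum_congr rfl (fun ij _ => hfg ij), Fintype.sum_prod_type] at main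
    exact main
  -- attainment
  have hmem : (T ^ (1/p)) ∈ {x : ℝ | ∃ σ : Matrix (Fin n) (Fin n) ℂ, σ.PosSemidef ∧
      σ.trace = 1 ∧ x = (Matrix.trace (mpow σ (1 - 1 / p) * (B * Bᴴ))).re} := by
    by_cases hT : T = 0
    · -- degenerate case : B * Bᴴ = 0
      have hsum0 : ∑ j, μ j ^ p = 0 := by rw [← hTdef]; exact hT
      have hμz : ∀ j, μ j = 0 := by
        intro j
        have h0 : μ j ^ p = 0 :=
          (Finset.sum_eq_zero_iff_of_nonneg
            (fun j _ => Real.rpow_nonneg (hμ0 j) p)).mp hsum0 j (Finset.mem_univ j)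
        exact (Real.rpow_eq_zero (hμ0 j) hpne).mp h0
      have hM0 : B * Bᴴ = 0 := by
        conv_lhs => rw [AMK.spectral hMH]
        have hdz : (fun i => ((μ i : ℝ) : ℂ)) = fun _ => (0:ℂ) := by
          funext i; rw [hμz i]; exact Complex.ofReal_zero
        rw [show (fun i => ((hMH.eigenvalues i : ℝ) : ℂ)) = fun _ => (0:ℂ) from hdz,
          Matrix.diagonal_zero, mul_zero, zero_mul]
      have hn0 : (n:ℝ) ≠ 0 := Nat.cast_ne_zero.mpr (by omega)
      refine ⟨Matrix.diagonal (fun _ => (((n:ℝ)⁻¹ : ℝ) : ℂ)), ?_, ?_, ?_⟩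
      · rw [Matrix.posSemidef_diagonal_iff]
        intro i
        rw [Complex.zero_le_real]
        positivity
      · rw [Matrix.trace_diagonal, Finset.sum_const, Finset.card_univ, Fintype.card_fin,
          nsmul_eq_mul]
        have hn0' : ((n:ℕ):ℂ) ≠ 0 := Nat.cast_ne_zero.mpr (by omega)
        push_cast
        exact mul_inv_cancel₀ hn0'
      · rw [hM0, mul_zero, Matrix.trace_zero, Complex.zero_re, hT,
          Real.zero_rpow (one_div_ne_zero hpne)]
    · have hTpos : 0 < T := lt_of_le_of_ne hT0 (Ne.symm hT)
      refine ⟨v * Matrix.diagonal (fun j => ((μ j ^ p / T : ℝ) : ℂ)) * star v, ?_, ?_, ?_⟩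
      · have hd : (Matrix.diagonal (fun j => ((μ j ^ p / T : ℝ) : ℂ))).PosSemidef := by
          rw [Matrix.posSemidef_diagonal_iff]
          intro j
          rw [Complex.zero_le_real]
          exact div_nonneg (Real.rpow_nonneg (hμ0 j) p) hT0
        have h := hd.mul_mul_conjTranspose_same v
        rwa [← Matrix.star_eq_conjTranspose] at h
      · rw [AMK.trace_conj_diag v hv2]
        have hs : ∑ j, (μ j ^ p / T) = 1 := by
          rw [← Finset.sum_div, ← hTdef, div_self (ne_of_gt hTpos)]
        calc ∑ j, ((μ j ^ p / T : ℝ) : ℂ) = ((∑ j, μ j ^ p / T : ℝ) : ℂ) := by push_cast; rfl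
          _ = 1 := by rw [hs, Complex.ofReal_one]
      · rw [AMK.mpow_unitary_conj v hv1 hv2]
        conv_rhs => rw [AMK.spectral hMH]
        rw [AMK.conj_mul_conj v hv2, Matrix.diagonal_mul_diagonal,
          AMK.trace_conj_diag v hv2]
        have hterm : ∀ j, ((((μ j ^ p / T) ^ ((1:ℝ) - 1/p) : ℝ)):ℂ) * ((μ j : ℝ) : ℂ)
            = ((((μ j ^ p / T) ^ ((1:ℝ) - 1/p) * μ j : ℝ)) : ℂ) :=
          fun j => (Complex.ofReal_mul _ _).symm
        rw [Finset.sum_congr rfl (fun j _ => hterm j)]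
        rw [show (∑ j, ((((μ j ^ p / T) ^ ((1:ℝ) - 1/p) * μ j : ℝ)) : ℂ))
            = ((∑ j, (μ j ^ p / T) ^ ((1:ℝ) - 1/p) * μ j : ℝ) : ℂ) by push_cast; rfl]
        rw [Complex.ofReal_re]
        have hjterm : ∀ j, (μ j ^ p / T) ^ ((1:ℝ) - 1/p) * μ j
            = μ j ^ p / T ^ ((1:ℝ) - 1/p) := by
          intro j
          rw [Real.div_rpow (Real.rpow_nonneg (hμ0 j) p) hT0,
            ← Real.rpow_mul (hμ0 j), div_mul_eq_mul_div]
          congr 1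
          have h3 := Real.rpow_add' (hμ0 j) (y := p * ((1:ℝ) - 1/p)) (z := 1)
            (by rw [show p * ((1:ℝ) - 1/p) + 1 = p by field_simp; ring]; exact hpne)
          rw [Real.rpow_one] at h3
          rw [← h3, show p * ((1:ℝ) - 1/p) + 1 = p by field_simp; ring]
        rw [Finset.sum_congr rfl (fun j _ => hjterm j)]
        rw [← Finset.sum_div, ← hTdef]
        rw [eq_div_iff (ne_of_gt (Real.rpow_pos_of_pos hTpos _)),
          ← Real.rpow_add hTpos, show 1/p + ((1:ℝ) - 1/p) = 1 by ring, Real.rpow_one]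
  exact le_antisymm (csSup_le ⟨_, hmem⟩ hub) (le_csSup ⟨_, hub⟩ hmem)
end

section
/- Let φ be a positive semidefinite n×n complex matrix and let k be an n×n complex matrix. Then the following are equivalent: (i) there exists a constant C ≥ 0 such that Tr(kᴴ aᴴ a k) ≤ C · Tr(φ^{1/2} aᴴ a φ^{1/2}) for all n×n complex matrices a; (ii) there exists an n×n complex matrix y such that k = φ^{1/2} y. (Finite-dimensional form of the majorization criterion used in the definition of the spatial derivative in the Appendix: the vector functional of k is dominated by a multiple of φ if and only if k lies in φ^{1/2}·M_n(ℂ).) -/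
open Matrix
open scoped ComplexOrder

lemma trace_sq_eq {m p : Type*} [Fintype m] [Fintype p] (B : Matrix m p ℂ) :
    Matrix.trace (Bᴴ * B) = ((∑ i, ∑ j, Complex.normSq (B i j) : ℝ) : ℂ) := by
  push_cast
  simp only [Matrix.trace, Matrix.diag, Matrix.mul_apply, Matrix.conjTranspose_apply,
    Complex.normSq_eq_conj_mul_self]
  rw [Finset.sum_comm]
  simp only [starRingEnd_apply]

lemma eq_zero_of_sum_normSq {m p : Type*} [Fintype m] [Fintype p] (B : Matrix m p ℂ)
    (h : ∑ i, ∑ j, Complex.normSq (B i j) ≤ 0) : B = 0 := by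
  have h0 : ∀ i ∈ Finset.univ, ∀ j ∈ (Finset.univ : Finset p), Complex.normSq (B i j) = 0 := by
    have := (Finset.sum_eq_zero_iff_of_nonneg (fun i _ =>
      Finset.sum_nonneg fun j _ => Complex.normSq_nonneg _)).mp
      (le_antisymm h (Finset.sum_nonneg fun i _ =>
        Finset.sum_nonneg fun j _ => Complex.normSq_nonneg _))
    intro i hi j hj
    exact (Finset.sum_eq_zero_iff_of_nonneg fun j _ => Complex.normSq_nonneg _).mp (this i hi) j hj
  ext i j
  simpa using Complex.normSq_eq_zero.mp (h0 i (Finset.mem_univ i) j (Finset.mem_univ j))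

lemma normSq_sum_mul_le {m : Type*} [Fintype m] (u v : m → ℂ) :
    Complex.normSq (∑ l, u l * v l) ≤
      (∑ l, Complex.normSq (u l)) * (∑ l, Complex.normSq (v l)) := by
  have h1 : ‖∑ l, u l * v l‖ ≤ ∑ l, ‖u l‖ * ‖v l‖ := by
    refine (norm_sum_le _ _).trans ?_
    simp [norm_mul, le_refl]
  calc Complex.normSq (∑ l, u l * v l)
      = ‖∑ l, u l * v l‖ ^ 2 := (Complex.sq_norm _).symm
    _ ≤ (∑ l, ‖u l‖ * ‖v l‖) ^ 2 := by
        exact pow_le_pow_left₀ (norm_nonneg _) h1 2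
    _ ≤ (∑ l, ‖u l‖ ^ 2) * (∑ l, ‖v l‖ ^ 2) :=
        Finset.sum_mul_sq_le_sq_mul_sq _ _ _
    _ = _ := by simp [Complex.sq_norm]




noncomputable def Matrix.PosSemidef.sqrt {n : ℕ} {A : Matrix (Fin n) (Fin n) ℂ}
    (hA : A.PosSemidef) : Matrix (Fin n) (Fin n) ℂ :=
  (hA.1.eigenvectorUnitary : Matrix (Fin n) (Fin n) ℂ) *
    diagonal ((↑) ∘ Real.sqrt ∘ hA.1.eigenvalues) *
    (star hA.1.eigenvectorUnitary : Matrix (Fin n) (Fin n) ℂ)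

lemma Matrix.PosSemidef.posSemidef_sqrt {n : ℕ} {A : Matrix (Fin n) (Fin n) ℂ}
    (hA : A.PosSemidef) : hA.sqrt.PosSemidef := by
  have hd : (diagonal ((↑) ∘ Real.sqrt ∘ hA.1.eigenvalues : Fin n → ℂ)).PosSemidef := by
    refine posSemidef_diagonal_iff.mpr fun i => ?_
    simp [Function.comp_apply, Complex.zero_le_real, Real.sqrt_nonneg]
  exact hd.mul_mul_conjTranspose_same _

lemma mpow_half {n : ℕ} (φ : Matrix (Fin n) (Fin n) ℂ) (hφ : φ.PosSemidef) :
    mpow φ (1 / 2) = hφ.sqrt := by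
  have h : (fun i => ((hφ.1.eigenvalues i ^ ((1:ℝ) / 2) : ℝ) : ℂ)) =
      Complex.ofReal ∘ Real.sqrt ∘ hφ.1.eigenvalues := by
    funext i
    simp [Function.comp, Real.sqrt_eq_rpow]
  rw [mpow, dif_pos hφ.1, Matrix.PosSemidef.sqrt, h]


theorem majorization_iff_factors {n : ℕ}
    (φ k : Matrix (Fin n) (Fin n) ℂ) (hφ : φ.PosSemidef) :
    (∃ C : ℝ, 0 ≤ C ∧ ∀ a : Matrix (Fin n) (Fin n) ℂ,
        (Matrix.trace (kᴴ * aᴴ * a * k)).re ≤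
          C * (Matrix.trace (mpow φ (1 / 2) * aᴴ * a * mpow φ (1 / 2))).re) ↔
      ∃ y : Matrix (Fin n) (Fin n) ℂ, k = mpow φ (1 / 2) * y := by
  classical
  rw [mpow_half φ hφ]
  set ψ := hφ.sqrt with hψdef
  have hψ : ψ.PosSemidef := hφ.posSemidef_sqrt
  have hE : ψ.IsHermitian := hψ.1
  have hψH : ψᴴ = ψ := hE
  set V : Matrix (Fin n) (Fin n) ℂ := (hE.eigenvectorUnitary : Matrix (Fin n) (Fin n) ℂ) with hVdef
  set lam := hE.eigenvalues with hlam
  have hVs : star V * V = 1 := Matrix.mem_unitaryGroup_iff'.mp hE.eigenvectorUnitary.2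
  have hspec : ψ = V * diagonal ((↑) ∘ lam) * star V := hE.spectral_theorem
  have hprod : ∀ d1 d2 : Fin n → ℂ,
      (V * diagonal d1 * star V) * (V * diagonal d2 * star V)
        = V * diagonal (fun i => d1 i * d2 i) * star V := by
    intro d1 d2
    calc (V * diagonal d1 * star V) * (V * diagonal d2 * star V)
        = V * (diagonal d1 * ((star V * V) * (diagonal d2 * star V))) := by
          simp only [Matrix.mul_assoc]
      _ = V * (diagonal d1 * diagonal d2) * star V := by
          rw [hVs, Matrix.one_mul]; simp only [Matrix.mul_assoc]
      _ = _ := by rw [diagonal_mul_diagonal]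
  set e : Fin n → ℂ := fun i => if lam i = 0 then 0 else 1 with he
  set P := V * diagonal e * star V with hPdef
  constructor
  · rintro ⟨C, hC0, hC⟩
    set g : Fin n → ℂ := fun i => if lam i = 0 then 0 else (((lam i)⁻¹ : ℝ) : ℂ) with hg
    have hψg : ψ * (V * diagonal g * star V) = P := by
      have hd : (fun i => (Complex.ofReal ∘ lam) i * g i) = e := by
        funext i
        by_cases h : lam i = 0
        · simp [hg, he, h]
        · simp [hg, he, h, ← Complex.ofReal_mul, mul_inv_cancel₀ h]
      conv_lhs => rw [hspec]
      rw [hprod, hd, hPdef]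
    have hPψ : P * ψ = ψ := by
      have hd : (fun i => e i * (Complex.ofReal ∘ lam) i) = Complex.ofReal ∘ lam := by
        funext i
        by_cases h : lam i = 0 <;> simp [he, h]
      conv_lhs => rw [hspec, hPdef, hprod]
      rw [hd, ← hspec]
    set a : Matrix (Fin n) (Fin n) ℂ := 1 - P with ha
    have haψ : a * ψ = 0 := by rw [ha, Matrix.sub_mul, Matrix.one_mul, hPψ, sub_self]
    have haH : aᴴ = a := by
      have hse : star e = e := by
        funext i
        by_cases h : lam i = 0 <;> simp [he, h]
      have hPH : Pᴴ = P := by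
        rw [hPdef]
        simp only [conjTranspose_mul, diagonal_conjTranspose, hse,
          Matrix.star_eq_conjTranspose, conjTranspose_conjTranspose, Matrix.mul_assoc]
      rw [ha, conjTranspose_sub, conjTranspose_one, hPH]
    have hψa : ψ * aᴴ = 0 := by
      have := congrArg conjTranspose haψ
      rw [conjTranspose_mul, hψH, conjTranspose_zero] at this
      rw [haH] at this ⊢
      exact this
    have h0 := hC a
    rw [Matrix.mul_assoc (ψ * aᴴ)] at h0
    rw [hψa, Matrix.zero_mul, trace_zero, Complex.zero_re, mul_zero] at h0
    have hlhs : kᴴ * aᴴ * a * k = (a * k)ᴴ * (a * k) := by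
      rw [conjTranspose_mul]
      simp only [Matrix.mul_assoc]
    rw [hlhs, trace_sq_eq, Complex.ofReal_re] at h0
    have hak : a * k = 0 := eq_zero_of_sum_normSq _ h0
    have hkP : k = P * k := by
      rw [ha, Matrix.sub_mul, Matrix.one_mul] at hak
      exact sub_eq_zero.mp hak
    exact ⟨V * diagonal g * star V * k, by
      rw [← Matrix.mul_assoc, hψg, ← hkP]⟩
  · rintro ⟨y, rfl⟩
    refine ⟨∑ i, ∑ j, Complex.normSq (y i j),
      Finset.sum_nonneg fun _ _ => Finset.sum_nonneg fun _ _ => Complex.normSq_nonneg _,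
      fun a => ?_⟩
    have h1 : (ψ * y)ᴴ * aᴴ * a * (ψ * y) = ((a * ψ) * y)ᴴ * ((a * ψ) * y) := by
      simp only [conjTranspose_mul, Matrix.mul_assoc]
    have h2 : ψ * aᴴ * a * ψ = (a * ψ)ᴴ * (a * ψ) := by
      rw [conjTranspose_mul, hψH]
      simp only [Matrix.mul_assoc]
    rw [h1, h2, trace_sq_eq, trace_sq_eq, Complex.ofReal_re, Complex.ofReal_re]
    set B := a * ψ with hB
    calc ∑ i, ∑ j, Complex.normSq ((B * y) i j)
        ≤ ∑ i, ∑ j, (∑ l, Complex.normSq (B i l)) * (∑ l, Complex.normSq (y l j)) := by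
          refine Finset.sum_le_sum fun i _ => Finset.sum_le_sum fun j _ => ?_
          rw [Matrix.mul_apply]
          exact normSq_sum_mul_le _ _
      _ = (∑ i, ∑ l, Complex.normSq (B i l)) * (∑ j, ∑ l, Complex.normSq (y l j)) := by
          rw [Finset.sum_mul_sum]
      _ = (∑ i, ∑ j, Complex.normSq (y i j)) * (∑ i, ∑ j, Complex.normSq (B i j)) := by
          rw [mul_comm]
          congr 1
          exact Finset.sum_comm
end
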